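/- Let β > 0, θ ∈ ℝ and x₀ ∈ ℝ. Define p(y) = Φ(√β·(x₀ − y − θ)), a(y) = (θ − p(y))/(1 − p(y)), and the regime's objective F(y) = ∫₀^{a(y)} (θ − α − (1 − α)·p(y)) dα − y²/2. Then on any open set of y where a(y) ∈ (0,1), F is differentiable and F′(y) = √β·φ(√β·(x₀ − y − θ))·a(y)·(1 − a(y)/2) − y. Consequently, any interior local maximum y₀ with a(y₀) ∈ (0,1) satisfies y₀ = √β·φ(√β·(x₀ − y₀ − θ))·a(y₀)·(1 − a(y₀)/2). -/

import Mathlib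

open Real Set MeasureTheory

/-- The standard normal density `φ(t) = exp(−t²/2)/√(2π)`. -/
noncomputable def stdNormalPDF (t : ℝ) : ℝ :=
  Real.exp (-(t ^ 2) / 2) / Real.sqrt (2 * Real.pi)

/-- The standard normal cumulative distribution function `Φ`. -/
noncomputable def stdNormalCDF (x : ℝ) : ℝ :=
  ∫ t in Set.Iic x, stdNormalPDF t

lemma stdNormalPDF_continuous : Continuous stdNormalPDF := by
  unfold stdNormalPDF; fun_prop

lemma stdNormalPDF_integrable : Integrable stdNormalPDF := by
  have h : stdNormalPDF = fun t => Real.exp (-(1/2) * t ^ 2) * (1 / Real.sqrt (2 * Real.pi)) := by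
    funext t; unfold stdNormalPDF; ring_nf
  rw [h]
  exact (integrable_exp_neg_mul_sq (by norm_num)).mul_const _

lemma hasDerivAt_stdNormalCDF (x : ℝ) : HasDerivAt stdNormalCDF (stdNormalPDF x) x := by
  have key : HasDerivAt (fun u => (∫ t in (0:ℝ)..u, stdNormalPDF t) + stdNormalCDF 0)
      (stdNormalPDF x) x := by
    have hii : IntervalIntegrable stdNormalPDF volume 0 x :=
      stdNormalPDF_integrable.intervalIntegrable
    have hm : StronglyMeasurableAtFilter stdNormalPDF (nhds x) volume :=
      stdNormalPDF_continuous.aestronglyMeasurable.stronglyMeasurableAtFilter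
    have hca : ContinuousAt stdNormalPDF x := stdNormalPDF_continuous.continuousAt
    exact (intervalIntegral.integral_hasDerivAt_right hii hm hca).add_const _
  have heq : (fun u => (∫ t in (0:ℝ)..u, stdNormalPDF t) + stdNormalCDF 0) = stdNormalCDF := by
    funext u
    show (∫ t in (0:ℝ)..u, stdNormalPDF t) + stdNormalCDF 0 = stdNormalCDF u
    unfold stdNormalCDF
    rw [← intervalIntegral.integral_Iic_sub_Iic stdNormalPDF_integrable.integrableOn
      stdNormalPDF_integrable.integrableOn]
    ring
  rw [← heq]; exact key

/-- With `p(y) = Φ(√β(x₀ − y − θ))`, `a(y) = (θ − p(y))/(1 − p(y))`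
and the regime's objective `F(y) = ∫₀^{a(y)} (θ − α − (1 − α)p(y)) dα − y²/2`: wherever
`a(y) ∈ (0,1)`, `F` is differentiable with
`F′(y) = √β·φ(√β(x₀ − y − θ))·a(y)(1 − a(y)/2) − y`; consequently any interior local
maximum `y₀` with `a(y₀) ∈ (0,1)` satisfies
`y₀ = √β·φ(√β(x₀ − y₀ − θ))·a(y₀)(1 − a(y₀)/2)`. -/
theorem regime_first_order_condition
    (β θ x₀ : ℝ) (hβ : 0 < β) (p a F : ℝ → ℝ)
    (hp : ∀ y : ℝ, p y = stdNormalCDF (Real.sqrt β * (x₀ - y - θ)))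
    (ha : ∀ y : ℝ, a y = (θ - p y) / (1 - p y))
    (hF : ∀ y : ℝ,
      F y = (∫ α in (0 : ℝ)..(a y), (θ - α - (1 - α) * p y)) - y ^ 2 / 2) :
    (∀ y : ℝ, a y ∈ Set.Ioo (0 : ℝ) 1 →
      HasDerivAt F
        (Real.sqrt β * stdNormalPDF (Real.sqrt β * (x₀ - y - θ)) * a y * (1 - a y / 2) - y)
        y) ∧
    (∀ y₀ : ℝ, a y₀ ∈ Set.Ioo (0 : ℝ) 1 → IsLocalMax F y₀ →
      y₀ = Real.sqrt β * stdNormalPDF (Real.sqrt β * (x₀ - y₀ - θ)) * a y₀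
        * (1 - a y₀ / 2)) := by
  have hpfun : p = fun z => stdNormalCDF (Real.sqrt β * (x₀ - z - θ)) := funext hp
  have hpderiv : ∀ y : ℝ, HasDerivAt p
      (-(Real.sqrt β * stdNormalPDF (Real.sqrt β * (x₀ - y - θ)))) y := by
    intro y
    have hinner : HasDerivAt (fun z : ℝ => Real.sqrt β * (x₀ - z - θ)) (-Real.sqrt β) y := by
      have h : HasDerivAt (fun z : ℝ => Real.sqrt β * (x₀ - z - θ))
          (Real.sqrt β * ((0 - 1) - 0)) y :=
        (((hasDerivAt_const y x₀).sub (hasDerivAt_id y)).sub (hasDerivAt_const y θ)).const_mul _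
      simpa using h
    have hcomp := (hasDerivAt_stdNormalCDF (Real.sqrt β * (x₀ - y - θ))).comp y hinner
    rw [hpfun]
    exact hcomp.congr_deriv (by ring)
  have hpcont : Continuous p := by
    rw [hpfun]
    exact (continuous_iff_continuousAt.mpr
      (fun x => (hasDerivAt_stdNormalCDF x).continuousAt)).comp (by fun_prop)
  have hFval : ∀ z : ℝ, 1 - p z ≠ 0 →
      F z = (θ - p z) ^ 2 / (2 * (1 - p z)) - z ^ 2 / 2 := by
    intro z hz
    have hrw : ∀ α : ℝ, θ - α - (1 - α) * p z = (θ - p z) - (1 - p z) * α := fun α => by ring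
    have hint : (∫ α in (0:ℝ)..(a z), (θ - α - (1 - α) * p z))
        = (θ - p z) * a z - (1 - p z) * (a z ^ 2 / 2) := by
      simp_rw [hrw]
      have h₁ : IntervalIntegrable (fun α : ℝ => (1 - p z) * α) volume 0 (a z) :=
        Continuous.intervalIntegrable (by fun_prop) _ _
      rw [intervalIntegral.integral_sub intervalIntegrable_const h₁,
        intervalIntegral.integral_const_mul, integral_id,
        intervalIntegral.integral_const]
      simp
      ring
    rw [hF z, hint, ha z]
    field_simp
    ring
  have main : ∀ y : ℝ, a y ∈ Set.Ioo (0 : ℝ) 1 →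
      HasDerivAt F
        (Real.sqrt β * stdNormalPDF (Real.sqrt β * (x₀ - y - θ)) * a y * (1 - a y / 2) - y) y := by
    intro y hy
    have hzy : 1 - p y ≠ 0 := by
      intro h
      rw [ha y, h, div_zero] at hy
      exact lt_irrefl _ hy.1
    set c : ℝ := Real.sqrt β * stdNormalPDF (Real.sqrt β * (x₀ - y - θ)) with hc
    -- derivative of the closed form G
    have h1 : HasDerivAt (fun z => θ - p z) c y := by
      exact ((hasDerivAt_const y θ).sub (hpderiv y)).congr_deriv (by rw [hc]; ring)
    have hN : HasDerivAt (fun z => (θ - p z) ^ 2) (2 * (θ - p y) * c) y := by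
      have := h1.pow 2
      exact this.congr_deriv (by norm_num <;> ring)
    have h2 : HasDerivAt (fun z => 1 - p z) c y := by
      exact ((hasDerivAt_const y (1:ℝ)).sub (hpderiv y)).congr_deriv (by rw [hc]; ring)
    have hD : HasDerivAt (fun z => 2 * (1 - p z)) (2 * c) y := by
      simpa using h2.const_mul 2
    have hD0 : 2 * (1 - p y) ≠ 0 := by
      simpa using hzy
    have hG : HasDerivAt (fun z => (θ - p z) ^ 2 / (2 * (1 - p z)) - z ^ 2 / 2)
        ((2 * (θ - p y) * c * (2 * (1 - p y)) - (θ - p y) ^ 2 * (2 * c)) / (2 * (1 - p y)) ^ 2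
          - y) y := by
      have hdiv := hN.div hD hD0
      have hsq : HasDerivAt (fun z : ℝ => z ^ 2 / 2) y y := by
        have := (hasDerivAt_id y).pow 2
        simpa using this.div_const 2
      exact hdiv.sub hsq
    -- eventual equality of F and G near y
    have hev : F =ᶠ[nhds y] fun z => (θ - p z) ^ 2 / (2 * (1 - p z)) - z ^ 2 / 2 := by
      have hopen : IsOpen {z : ℝ | 1 - p z ≠ 0} :=
        isOpen_ne.preimage (continuous_const.sub hpcont)
      filter_upwards [hopen.mem_nhds hzy] with z hz using hFval z hz
    have hFderiv := hG.congr_of_eventuallyEq hev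
    refine hFderiv.congr_deriv ?_
    rw [ha y]
    field_simp
  refine ⟨main, fun y₀ hy₀ hmax => ?_⟩
  have h0 := hmax.hasDerivAt_eq_zero (main y₀ hy₀)
  linarith [h0]
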